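/- arXiv:1704.03649 — 2 statements merged into one kernel-verified Lean document; each statement's English description precedes it below -/
import Mathlib

section
/- (Inf-sup condition of Lemma 3.3, limiting case t = 0, in abstract form.) Let 𝕄 be a real normed space, Θ a real inner product space, W a real vector space, G : W → Θ a linear map, and d : 𝕄 → Θ → ℝ a bilinear form. Let c₁, c̲ ∈ (0, 1] and c̄ ≥ 1 be constants. Fix θ ∈ Θ and w ∈ W, and suppose M̃ ∈ 𝕄 satisfies d(M̃, θ) ≥ c₁ ‖M̃‖ ‖θ‖ and c̲ ‖θ‖ ≤ ‖M̃‖ ≤ c̄ ‖θ‖. Then, setting M := (2/(c₁ c̲)) M̃ and γ := G w − θ, one has d(M, θ) + ⟪γ, G w − θ⟫ ≥ (c₁ c̲ / (√2 c̄)) · √(‖M‖² + ‖γ‖²) · √(‖θ‖² + ‖G w‖²/2). -/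
open RealInnerProductSpace Real

lemma infsup_aux2 (x u a r m : ℝ) (hx : 0 < x) (hx1 : x ≤ 1) (hu : 1 ≤ u)
    (ha : 0 ≤ a) (hm0 : 0 ≤ m) (hm : m ≤ u * a) :
    x ^ 2 / (2 * u ^ 2) * (((2 / x) * m) ^ 2 + r ^ 2) ≤ 2 * a ^ 2 + r ^ 2 := by
  have hu0 : (0:ℝ) < u := lt_of_lt_of_le one_pos hu
  have key : x ^ 2 / (2 * u ^ 2) * (((2 / x) * m) ^ 2 + r ^ 2)
      = 2 * m ^ 2 / u ^ 2 + x ^ 2 / (2 * u ^ 2) * r ^ 2 := by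
    field_simp
  rw [key]
  have h1 : 2 * m ^ 2 / u ^ 2 ≤ 2 * a ^ 2 := by
    rw [div_le_iff₀ (by positivity)]; nlinarith
  have h2 : x ^ 2 / (2 * u ^ 2) * r ^ 2 ≤ r ^ 2 := by
    have : x ^ 2 / (2 * u ^ 2) ≤ 1 := by
      rw [div_le_one (by positivity)]; nlinarith
    nlinarith [sq_nonneg r]
  linarith

theorem infsup_B_limit_case
    {M𝕄 : Type*} [NormedAddCommGroup M𝕄] [NormedSpace ℝ M𝕄]
    {Θ : Type*} [NormedAddCommGroup Θ] [InnerProductSpace ℝ Θ]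
    {W : Type*} [AddCommGroup W] [Module ℝ W]
    (G : W →ₗ[ℝ] Θ) (d : M𝕄 →ₗ[ℝ] Θ →ₗ[ℝ] ℝ)
    (c₁ cl cu : ℝ) (hc₁ : 0 < c₁) (hc₁' : c₁ ≤ 1) (hcl : 0 < cl) (hcl' : cl ≤ 1)
    (hcu : 1 ≤ cu)
    (θ : Θ) (w : W) (Mtil : M𝕄)
    (hinfsup : d Mtil θ ≥ c₁ * ‖Mtil‖ * ‖θ‖)
    (hlo : cl * ‖θ‖ ≤ ‖Mtil‖) (hhi : ‖Mtil‖ ≤ cu * ‖θ‖) :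
    d ((2 / (c₁ * cl)) • Mtil) θ + ⟪G w - θ, G w - θ⟫ ≥
      (c₁ * cl / (Real.sqrt 2 * cu)) *
        Real.sqrt (‖(2 / (c₁ * cl)) • Mtil‖ ^ 2 + ‖G w - θ‖ ^ 2) *
        Real.sqrt (‖θ‖ ^ 2 + ‖G w‖ ^ 2 / 2) := by
  have hccl : 0 < c₁ * cl := mul_pos hc₁ hcl
  have hcu0 : (0:ℝ) < cu := lt_of_lt_of_le one_pos hcu
  set a := ‖θ‖ with ha
  set r := ‖G w - θ‖ with hr
  set g := ‖G w‖ with hg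
  set mt := ‖Mtil‖ with hmt
  have ha0 : 0 ≤ a := norm_nonneg _
  have hr0 : 0 ≤ r := norm_nonneg _
  have hg0 : 0 ≤ g := norm_nonneg _
  have hmt0 : 0 ≤ mt := norm_nonneg _
  have hm : ‖(2 / (c₁ * cl)) • Mtil‖ = (2 / (c₁ * cl)) * mt := by
    rw [norm_smul, Real.norm_eq_abs, abs_of_pos (by positivity)]
  have hinner : ⟪G w - θ, G w - θ⟫ = r ^ 2 := by
    rw [real_inner_self_eq_norm_sq]
  have hdM : d ((2 / (c₁ * cl)) • Mtil) θ = (2 / (c₁ * cl)) * d Mtil θ := by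
    simp [map_smul]
  have hgle : g ≤ r + a := by
    calc g = ‖(G w - θ) + θ‖ := by rw [sub_add_cancel]
    _ ≤ r + a := norm_add_le _ _
  clear_value a r g mt
  -- LHS bound
  have hL : 2 * a ^ 2 + r ^ 2 ≤ d ((2 / (c₁ * cl)) • Mtil) θ + ⟪G w - θ, G w - θ⟫ := by
    rw [hdM, hinner]
    have h1 : c₁ * mt * a ≤ d Mtil θ := hinfsup
    have h2 : c₁ * (cl * a) * a ≤ c₁ * mt * a :=
      mul_le_mul_of_nonneg_right (mul_le_mul_of_nonneg_left hlo hc₁.le) ha0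
    have h3 : c₁ * (cl * a) * a ≤ d Mtil θ := le_trans h2 h1
    have h4 : (2 / (c₁ * cl)) * (c₁ * (cl * a) * a) ≤ (2 / (c₁ * cl)) * d Mtil θ :=
      mul_le_mul_of_nonneg_left h3 (by positivity)
    have h5 : (2 / (c₁ * cl)) * (c₁ * (cl * a) * a) = 2 * a ^ 2 := by
      field_simp
    nlinarith [h4, h5]
  -- RHS bound
  set K := c₁ * cl / (Real.sqrt 2 * cu) with hK
  have hs2 : Real.sqrt 2 ^ 2 = 2 := Real.sq_sqrt (by norm_num)
  have hs2pos : (0:ℝ) < Real.sqrt 2 := by positivity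
  have hK0 : 0 < K := by positivity
  have hK2 : K ^ 2 = (c₁ * cl) ^ 2 / (2 * cu ^ 2) := by
    have hden : (Real.sqrt 2 * cu) ^ 2 = 2 * cu ^ 2 := by rw [mul_pow, hs2]
    rw [hK, div_pow, hden]
  have hX : K ^ 2 * (‖(2 / (c₁ * cl)) • Mtil‖ ^ 2 + r ^ 2) ≤ 2 * a ^ 2 + r ^ 2 := by
    rw [hm, hK2]
    exact infsup_aux2 (c₁ * cl) cu a r mt hccl
      (mul_le_one₀ hc₁' hcl.le hcl') hcu ha0 hmt0 hhi
  have hY : a ^ 2 + g ^ 2 / 2 ≤ 2 * a ^ 2 + r ^ 2 := by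
    have h1 : g * g ≤ (r + a) * (r + a) := mul_self_le_mul_self hg0 hgle
    nlinarith [sq_nonneg (r - a), h1]
  -- combine
  have hXnn : 0 ≤ ‖(2 / (c₁ * cl)) • Mtil‖ ^ 2 + r ^ 2 := by positivity
  have hYnn : 0 ≤ a ^ 2 + g ^ 2 / 2 := by positivity
  have hZnn : 0 ≤ 2 * a ^ 2 + r ^ 2 := by positivity
  have e1 : K * Real.sqrt (‖(2 / (c₁ * cl)) • Mtil‖ ^ 2 + r ^ 2)
      = Real.sqrt (K ^ 2 * (‖(2 / (c₁ * cl)) • Mtil‖ ^ 2 + r ^ 2)) := by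
    rw [Real.sqrt_mul (sq_nonneg K), Real.sqrt_sq hK0.le]
  have e2 : Real.sqrt (K ^ 2 * (‖(2 / (c₁ * cl)) • Mtil‖ ^ 2 + r ^ 2))
      ≤ Real.sqrt (2 * a ^ 2 + r ^ 2) := Real.sqrt_le_sqrt hX
  have e3 : Real.sqrt (a ^ 2 + g ^ 2 / 2) ≤ Real.sqrt (2 * a ^ 2 + r ^ 2) :=
    Real.sqrt_le_sqrt hY
  have e4 : K * Real.sqrt (‖(2 / (c₁ * cl)) • Mtil‖ ^ 2 + r ^ 2) *
      Real.sqrt (a ^ 2 + g ^ 2 / 2) ≤ 2 * a ^ 2 + r ^ 2 := by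
    calc K * Real.sqrt (‖(2 / (c₁ * cl)) • Mtil‖ ^ 2 + r ^ 2) *
        Real.sqrt (a ^ 2 + g ^ 2 / 2)
        ≤ Real.sqrt (2 * a ^ 2 + r ^ 2) * Real.sqrt (2 * a ^ 2 + r ^ 2) := by
          apply mul_le_mul (e1 ▸ e2) e3 (Real.sqrt_nonneg _) (Real.sqrt_nonneg _)
      _ = 2 * a ^ 2 + r ^ 2 := Real.mul_self_sqrt hZnn
  exact le_trans e4 hL
end

section
/- (Inf-sup condition of Lemma 3.6, positive thickness t > 0, in abstract form.) Let 𝕄 be a real normed space, V a real inner product space, N : V → ℝ a function with ‖v‖ ≤ N(v) for all v ∈ V, W a real normed space, G : W → V a linear map, and c_F ≥ 0 a constant with ‖w‖² ≤ (1 + c_F²) ‖G w‖² for all w ∈ W. Let d : 𝕄 → V → ℝ be a bilinear form and c₁, c̲ ∈ (0, 1], c̄ ≥ 1 constants. Fix t with 0 < t ≤ 1, θ ∈ V and w ∈ W, and suppose M ∈ 𝕄 satisfies d(M, θ) ≥ c₁ ‖M‖ N(θ) and c̲ N(θ) ≤ ‖M‖ ≤ c̄ N(θ). Then, setting γ :=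 t⁻² (G w − θ), one has d(M, θ) + ⟪γ, G w − θ⟫ ≥ (c₁ c̲ / (c̄ √(1 + 2(1 + c_F²)))) · √(‖M‖² + t² ‖γ‖²) · √(N(θ)² + ‖w‖² + t⁻² ‖G w − θ‖²). -/
open RealInnerProductSpace Real

set_option maxHeartbeats 1000000 in
theorem infsup_B_positive_thickness
    {M𝕄 : Type*} [NormedAddCommGroup M𝕄] [NormedSpace ℝ M𝕄]
    {V : Type*} [NormedAddCommGroup V] [InnerProductSpace ℝ V]
    {W : Type*} [NormedAddCommGroup W] [NormedSpace ℝ W]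
    (N : V → ℝ) (hN : ∀ v : V, ‖v‖ ≤ N v)
    (G : W →ₗ[ℝ] V)
    (cF : ℝ) (hcF : 0 ≤ cF)
    (hFriedrichs : ∀ w : W, ‖w‖ ^ 2 ≤ (1 + cF ^ 2) * ‖G w‖ ^ 2)
    (d : M𝕄 →ₗ[ℝ] V →ₗ[ℝ] ℝ)
    (c₁ cl cu : ℝ) (hc₁ : 0 < c₁) (hc₁' : c₁ ≤ 1) (hcl : 0 < cl) (hcl' : cl ≤ 1)
    (hcu : 1 ≤ cu)
    (t : ℝ) (ht : 0 < t) (ht' : t ≤ 1)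
    (θ : V) (w : W) (M : M𝕄)
    (hinfsup : d M θ ≥ c₁ * ‖M‖ * N θ)
    (hlo : cl * N θ ≤ ‖M‖) (hhi : ‖M‖ ≤ cu * N θ) :
    d M θ + ⟪(t⁻¹ ^ 2) • (G w - θ), G w - θ⟫ ≥
      (c₁ * cl / (cu * Real.sqrt (1 + 2 * (1 + cF ^ 2)))) *
        Real.sqrt (‖M‖ ^ 2 + t ^ 2 * ‖(t⁻¹ ^ 2) • (G w - θ)‖ ^ 2) *
        Real.sqrt (N θ ^ 2 + ‖w‖ ^ 2 + t⁻¹ ^ 2 * ‖G w - θ‖ ^ 2) := by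
  have hs : (0:ℝ) < t⁻¹ ^ 2 := by positivity
  set s : ℝ := t⁻¹ ^ 2 with hsdef
  set v : V := G w - θ with hv
  have hn0 : 0 ≤ N θ := le_trans (norm_nonneg θ) (hN θ)
  have hm0 : 0 ≤ ‖M‖ := norm_nonneg M
  have hinner : ⟪s • v, v⟫ = s * ‖v‖ ^ 2 := by
    rw [real_inner_smul_left, real_inner_self_eq_norm_sq]
  have hnormsmul : ‖s • v‖ = s * ‖v‖ := by
    rw [norm_smul, Real.norm_eq_abs, abs_of_pos hs]
  have hts : t ^ 2 * s = 1 := by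
    rw [hsdef]; field_simp
  have h1 : t ^ 2 * ‖s • v‖ ^ 2 = s * ‖v‖ ^ 2 := by
    rw [hnormsmul]
    have h : t ^ 2 * (s * ‖v‖) ^ 2 = (t ^ 2 * s) * (s * ‖v‖ ^ 2) := by ring
    rw [h, hts, one_mul]
  have hinv : 1 ≤ t⁻¹ := by
    have h := mul_inv_cancel₀ (ne_of_gt ht)
    nlinarith [inv_pos.mpr ht]
  have hs1 : 1 ≤ s := by nlinarith
  set C : ℝ := 1 + 2 * (1 + cF ^ 2) with hC
  have hC3 : (3:ℝ) ≤ C := by nlinarith [sq_nonneg cF]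
  have hC0 : (0:ℝ) < C := by linarith
  set X : ℝ := N θ ^ 2 + s * ‖v‖ ^ 2 with hX
  have hX0 : 0 ≤ X := by positivity
  have hcu0 : (0:ℝ) < cu := by linarith
  have hb1 : Real.sqrt (‖M‖ ^ 2 + t ^ 2 * ‖s • v‖ ^ 2) ≤ cu * Real.sqrt X := by
    rw [h1, show cu * Real.sqrt X = Real.sqrt (cu ^ 2 * X) by
      rw [Real.sqrt_mul (sq_nonneg cu), Real.sqrt_sq hcu0.le]]
    apply Real.sqrt_le_sqrt
    rw [hX]
    nlinarith [mul_le_mul hhi hhi hm0 (by positivity : (0:ℝ) ≤ cu * N θ),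
      mul_nonneg (mul_nonneg (by nlinarith : (0:ℝ) ≤ cu ^ 2 - 1) hs.le) (sq_nonneg ‖v‖)]
  have hGw : ‖G w‖ ≤ ‖v‖ + N θ := by
    have h : G w = v + θ := by rw [hv, sub_add_cancel]
    rw [h]
    exact le_trans (norm_add_le v θ) (by linarith [hN θ])
  have hw2 : ‖w‖ ^ 2 ≤ (1 + cF ^ 2) * (2 * ‖v‖ ^ 2 + 2 * N θ ^ 2) := by
    have h2 := hFriedrichs w
    have h3 : ‖G w‖ ^ 2 ≤ 2 * ‖v‖ ^ 2 + 2 * N θ ^ 2 := by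
      nlinarith [norm_nonneg (G w), norm_nonneg v, sq_nonneg (‖v‖ - N θ)]
    nlinarith [sq_nonneg cF]
  have hb2 : Real.sqrt (N θ ^ 2 + ‖w‖ ^ 2 + s * ‖v‖ ^ 2) ≤ Real.sqrt C * Real.sqrt X := by
    rw [← Real.sqrt_mul hC0.le]
    apply Real.sqrt_le_sqrt
    have hvs : ‖v‖ ^ 2 ≤ s * ‖v‖ ^ 2 := by nlinarith [sq_nonneg ‖v‖]
    rw [hX, hC]
    nlinarith [mul_le_mul_of_nonneg_left hvs (by positivity : (0:ℝ) ≤ 2 * (1 + cF ^ 2)), hw2]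
  have hsqC : 0 < Real.sqrt C := Real.sqrt_pos.mpr hC0
  have hXX : Real.sqrt X * Real.sqrt X = X := Real.mul_self_sqrt hX0
  have hRHS : (c₁ * cl / (cu * Real.sqrt C)) *
        Real.sqrt (‖M‖ ^ 2 + t ^ 2 * ‖s • v‖ ^ 2) *
        Real.sqrt (N θ ^ 2 + ‖w‖ ^ 2 + s * ‖v‖ ^ 2) ≤ c₁ * cl * X := by
    have hκ0 : 0 < c₁ * cl / (cu * Real.sqrt C) := by positivity
    have hB0 : 0 ≤ Real.sqrt (N θ ^ 2 + ‖w‖ ^ 2 + s * ‖v‖ ^ 2) := Real.sqrt_nonneg _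
    calc (c₁ * cl / (cu * Real.sqrt C)) *
        Real.sqrt (‖M‖ ^ 2 + t ^ 2 * ‖s • v‖ ^ 2) *
        Real.sqrt (N θ ^ 2 + ‖w‖ ^ 2 + s * ‖v‖ ^ 2)
        ≤ (c₁ * cl / (cu * Real.sqrt C)) * (cu * Real.sqrt X) * (Real.sqrt C * Real.sqrt X) := by
          apply mul_le_mul
          · exact mul_le_mul_of_nonneg_left hb1 hκ0.le
          · exact hb2
          · exact hB0
          · positivity
      _ = c₁ * cl * X := by
          rw [div_mul_eq_mul_div, div_mul_eq_mul_div, div_eq_iff (by positivity)]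
          linear_combination (c₁ * cl * cu * Real.sqrt C) * hXX
  have hLHS : c₁ * cl * X ≤ d M θ + s * ‖v‖ ^ 2 := by
    have h4 : c₁ * cl * N θ ^ 2 ≤ d M θ := by
      nlinarith [mul_nonneg (mul_nonneg hc₁.le (sub_nonneg.mpr hlo)) hn0]
    have h5 : c₁ * cl * (s * ‖v‖ ^ 2) ≤ s * ‖v‖ ^ 2 := by
      nlinarith [mul_nonneg (mul_nonneg (by nlinarith : (0:ℝ) ≤ 1 - c₁ * cl) hs.le)
        (sq_nonneg ‖v‖)]
    rw [hX]
    have hexp : c₁ * cl * (N θ ^ 2 + s * ‖v‖ ^ 2)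
        = c₁ * cl * N θ ^ 2 + c₁ * cl * (s * ‖v‖ ^ 2) := by ring
    rw [hexp]
    linarith [h4, h5]
  rw [hinner]
  calc d M θ + s * ‖v‖ ^ 2 ≥ c₁ * cl * X := hLHS
    _ ≥ _ := hRHS
end
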